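/- Instrumenting with a sound trimming condition yields a trimmed program: if Φ ⇒ wp(s, true), then 'assume ¬Φ; s' is a trimmed version of s. -/
import Mathlib

abbrev Var := String
abbrev State := Var → ℤ

inductive Outcome | fail | assumeViolation | ok
deriving DecidableEq

inductive Stmt
  | skip
  | assign (v : Var) (e : State → ℤ)
  | assertS (p : State → Prop)
  | assumeS (p : State → Prop)
  | seq (s₁ s₂ : Stmt)
  | ite (s₁ s₂ : Stmt)

inductive Exec : Stmt → State → Outcome → State → Prop
  | skip {σ} : Exec .skip σ .ok σ
  | assign {σ v e} : Exec (.assign v e) σ .ok (Function.update σ v (e σ))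
  | assertOk {σ p} : p σ → Exec (.assertS p) σ .ok σ
  | assertFail {σ p} : ¬ p σ → Exec (.assertS p) σ .fail σ
  | assumeOk {σ p} : p σ → Exec (.assumeS p) σ .ok σ
  | assumeViol {σ p} : ¬ p σ → Exec (.assumeS p) σ .assumeViolation σ
  | seqOk {s₁ s₂ σ σ₁ φ σ₂} : Exec s₁ σ .ok σ₁ → Exec s₂ σ₁ φ σ₂ → Exec (.seq s₁ s₂) σ φ σ₂
  | seqAbort {s₁ s₂ σ φ σ₁} : Exec s₁ σ φ σ₁ → φ ≠ .ok → Exec (.seq s₁ s₂) σ φ σ₁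
  | iteL {s₁ s₂ σ φ σ'} : Exec s₁ σ φ σ' → Exec (.ite s₁ s₂) σ φ σ'
  | iteR {s₁ s₂ σ φ σ'} : Exec s₂ σ φ σ' → Exec (.ite s₁ s₂) σ φ σ'

def EquiSafe (s s' : Stmt) : Prop :=
  ∀ σ σ', Exec s σ .fail σ' ↔ Exec s' σ .fail σ'

def Trimmed (s s' : Stmt) : Prop :=
  EquiSafe s s' ∧
  (∀ σ σ', Exec s σ .ok σ' →
     Exec s' σ .ok σ' ∨ ∃ σ'', Exec s' σ .assumeViolation σ'') ∧
  (∀ σ σ', Exec s σ .assumeViolation σ' → ∃ σ'', Exec s' σ .assumeViolation σ'')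

/-- Instrumenting with a sound trimming condition yields a trimmed program:
if Φ ⇒ wp(s, true), then 'assume ¬Φ; s' is a trimmed version of s. -/
theorem instrumented_is_trimmed (s : Stmt) (Φ : State → Prop)
    (hsafe : ∀ σ, Φ σ → ∀ σ', ¬ Exec s σ .fail σ') :
    Trimmed s (.seq (.assumeS fun σ => ¬ Φ σ) s) := by
  refine ⟨?_, ?_, ?_⟩
  · intro σ σ'
    constructor
    · intro h
      have hnΦ : ¬ Φ σ := fun hΦ => hsafe σ hΦ σ' h
      exact Exec.seqOk (Exec.assumeOk hnΦ) h
    · intro h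
      cases h with
      | seqOk h1 h2 => cases h1; exact h2
      | seqAbort h1 _ => cases h1
  · intro σ σ' h
    by_cases hΦ : Φ σ
    · exact Or.inr ⟨σ, Exec.seqAbort (Exec.assumeViol (not_not_intro hΦ)) (by simp)⟩
    · exact Or.inl (Exec.seqOk (Exec.assumeOk hΦ) h)
  · intro σ σ' h
    by_cases hΦ : Φ σ
    · exact ⟨σ, Exec.seqAbort (Exec.assumeViol (not_not_intro hΦ)) (by simp)⟩
    · exact ⟨σ', Exec.seqOk (Exec.assumeOk hΦ) h⟩
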